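/- For a binary symmetric source (X uniform on {0,1}) with Hamming distortion, and 0 ≤ D_{12} ≤ D_1 ≤ 1/2, the minimum side distortion of the second description in an optimal scalable code, D*_{2}(D_1, D_{12}), equals 1/2 + D_{12} − D_1. Concretely: over all finite random variables X_1, X_2 jointly distributed with X and functions g_1, g_2 such that X_1 ⟂ X_2, I(X;X_1) = 1 − H_b(D_1), I(X; X_1, X_2) = 1 − H_b(D_{12}), E[d(X,X_1)] ≤ D_1, and E[d(X, g_2(X_1,X_2))] ≤ D_{12}, the minimum of E[d(X, g_1(X_2))] equals 1/2 + D_{12} − D_1. -/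

import Mathlib

open scoped BigOperators

namespace MDC

structure FinProb (Ω : Type*) [Fintype Ω] where
  μ : Ω → ℝ
  nonneg : ∀ ω, 0 ≤ μ ω
  sum_one : ∑ ω, μ ω = 1

variable {Ω : Type*} [Fintype Ω]

/-- Probability that the random variable `f` takes the value `a`. -/
noncomputable def pr (P : FinProb Ω) {A : Type*} [DecidableEq A] (f : Ω → A) (a : A) : ℝ :=
  ∑ ω, if f ω = a then P.μ ω else 0

/-- Shannon entropy (base 2) of a finite random variable. -/
noncomputable def H (P : FinProb Ω) {A : Type*} [Fintype A] [DecidableEq A] (f : Ω → A) : ℝ :=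
  - ∑ a, pr P f a * Real.logb 2 (pr P f a)

/-- Conditional entropy H(f|g). -/
noncomputable def Hcond (P : FinProb Ω) {A B : Type*} [Fintype A] [DecidableEq A]
    [Fintype B] [DecidableEq B] (f : Ω → A) (g : Ω → B) : ℝ :=
  H P (fun ω => (f ω, g ω)) - H P g

/-- Mutual information I(f;g). -/
noncomputable def MI (P : FinProb Ω) {A B : Type*} [Fintype A] [DecidableEq A]
    [Fintype B] [DecidableEq B] (f : Ω → A) (g : Ω → B) : ℝ :=
  H P f + H P g - H P (fun ω => (f ω, g ω))

/-- Conditional mutual information I(f;g|h). -/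
noncomputable def CMI (P : FinProb Ω) {A B C : Type*} [Fintype A] [DecidableEq A]
    [Fintype B] [DecidableEq B] [Fintype C] [DecidableEq C]
    (f : Ω → A) (g : Ω → B) (h : Ω → C) : ℝ :=
  H P (fun ω => (f ω, h ω)) + H P (fun ω => (g ω, h ω))
    - H P (fun ω => (f ω, g ω, h ω)) - H P h

/-- Independence of two finite random variables. -/
def Indep (P : FinProb Ω) {A B : Type*} [DecidableEq A] [DecidableEq B]
    (f : Ω → A) (g : Ω → B) : Prop :=
  ∀ a b, pr P (fun ω => (f ω, g ω)) (a, b) = pr P f a * pr P g b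

/-- Conditional independence of `f` and `g` given `h` (a Markov chain f − h − g). -/
def CondIndep (P : FinProb Ω) {A B C : Type*} [DecidableEq A] [DecidableEq B] [DecidableEq C]
    (f : Ω → A) (g : Ω → B) (h : Ω → C) : Prop :=
  ∀ a b c, pr P h c * pr P (fun ω => (f ω, g ω, h ω)) (a, b, c) =
    pr P (fun ω => (f ω, h ω)) (a, c) * pr P (fun ω => (g ω, h ω)) (b, c)

/-- Binary entropy function. -/
noncomputable def Hb (p : ℝ) : ℝ := -(p * Real.logb 2 p) - (1 - p) * Real.logb 2 (1 - p)

/-- Expected Hamming distortion between two random variables. -/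
noncomputable def Edist (P : FinProb Ω) {A : Type*} [DecidableEq A] (f g : Ω → A) : ℝ :=
  ∑ ω, P.μ ω * (if f ω = g ω then 0 else 1)

end MDC

namespace MDCProof

open MDC

/-! ### Basic lemmas about `L x = x * logb 2 x` -/

noncomputable def L (x : ℝ) : ℝ := x * Real.logb 2 x

lemma L_mul {x y : ℝ} (hx : 0 ≤ x) (hy : 0 ≤ y) : L (x*y) = x * L y + y * L x := by
  rcases eq_or_lt_of_le hx with h|h
  · simp [L, ← h]
  rcases eq_or_lt_of_le hy with h'|h'
  · simp [L, ← h']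
  unfold L
  rw [Real.logb_mul (ne_of_gt h) (ne_of_gt h')]
  ring

lemma logb_two_half : Real.logb 2 (1/2) = -1 := by
  rw [show (1:ℝ)/2 = 2⁻¹ by norm_num, Real.logb_inv, Real.logb_self_eq_one] <;> norm_num

lemma L_half : L (1/2) = -(1/2) := by rw [L, logb_two_half]; ring

lemma L_quarter : L (1/4) = -(1/2) := by
  have : Real.logb 2 (1/4) = -2 := by
    rw [show (1:ℝ)/4 = (1/2 : ℝ)*(1/2) by norm_num,
      Real.logb_mul (by norm_num) (by norm_num), logb_two_half]
    norm_num
  rw [L, this]; norm_num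

lemma Lhalfsplit {p : ℝ} (hp : 0 ≤ p) : L (p/2) = -(p/2) + L p / 2 := by
  rw [show p/2 = p * (1/2) by ring, L_mul hp (by norm_num), L_half]
  ring

lemma Lquart {p : ℝ} (hp : 0 ≤ p) : L (p/4) = -(p/2) + L p / 4 := by
  rw [show p/4 = p * (1/4) by ring, L_mul hp (by norm_num), L_quarter]
  ring

lemma LquartMul {u v : ℝ} (hu : 0 ≤ u) (hv : 0 ≤ v) :
    L (u*v/4) = -(u*v/2) + u * L v / 4 + v * L u / 4 := by
  rw [show u*v/4 = u * (v/4) by ring, L_mul hu (by positivity), Lquart hv]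
  ring

lemma L_comm3 (x y : ℝ) : L (x+y) - L x - L y = L (y+x) - L y - L x := by
  rw [add_comm]; ring

lemma Hb_eq (p : ℝ) : Hb p = - L p - L (1-p) := by
  unfold Hb L; ring

/-! ### Gibbs inequality and rigidity -/

/-- Binary Gibbs inequality with equality case. -/
lemma binGibbs {m t : ℝ} (hm0 : 0 ≤ m) (hm1 : m ≤ 1) (ht0 : 0 < t) (ht1 : t < 1) :
    Hb m ≤ Hb t + (Real.logb 2 (1-t) - Real.logb 2 t) * (m - t) ∧
    (Hb m = Hb t + (Real.logb 2 (1-t) - Real.logb 2 t) * (m - t) → m = t) := by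
  have key : Hb t + (Real.logb 2 (1-t) - Real.logb 2 t) * (m - t) - Hb m
      = (m * (Real.log m - Real.log t) + (1-m) * (Real.log (1-m) - Real.log (1-t))) / Real.log 2 := by
    unfold Hb Real.logb; ring
  have hlog2 : (0:ℝ) < Real.log 2 := Real.log_pos (by norm_num)
  have main : m ≠ t → 0 < m * (Real.log m - Real.log t) + (1-m) * (Real.log (1-m) - Real.log (1-t)) := by
    intro hne
    rcases eq_or_lt_of_le hm0 with h0|h0
    · rw [← h0]
      have := Real.log_neg (by linarith : (0:ℝ) < 1 - t) (by linarith : 1 - t < 1)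
      simp only [zero_mul, sub_zero, one_mul, Real.log_one]
      nlinarith
    rcases eq_or_lt_of_le hm1 with h1|h1
    · rw [h1]
      have := Real.log_neg ht0 ht1
      simp only [one_mul, sub_self, zero_mul, Real.log_one]
      nlinarith
    · have t1 : m * (Real.log m - Real.log t) ≥ m - t := by
        have hlt : Real.log (t/m) ≤ t/m - 1 := Real.log_le_sub_one_of_pos (by positivity)
        have e : Real.log (t/m) = Real.log t - Real.log m := Real.log_div (ne_of_gt ht0) (ne_of_gt h0)
        rw [e] at hlt
        have h3 := mul_le_mul_of_nonneg_left hlt (le_of_lt h0)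
        have hm' : m * (t/m - 1) = t - m := by field_simp
        nlinarith
      have t2 : (1-m) * (Real.log (1-m) - Real.log (1-t)) > t - m := by
        have hx : (0:ℝ) < (1-t)/(1-m) := by
          apply div_pos <;> linarith
        have hne' : (1-t)/(1-m) ≠ 1 := by
          intro h
          apply hne
          rw [div_eq_one_iff_eq (by linarith : (1:ℝ) - m ≠ 0)] at h
          linarith
        have hlt := Real.log_lt_sub_one_of_pos hx hne'
        have e : Real.log ((1-t)/(1-m)) = Real.log (1-t) - Real.log (1-m) :=
          Real.log_div (by linarith) (by linarith)
        rw [e] at hlt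
        have h2 := mul_lt_mul_of_pos_left hlt (by linarith : (0:ℝ) < 1 - m)
        have hc := mul_div_cancel₀ (1-t) (show (1:ℝ)-m ≠ 0 by linarith)
        have hm' : (1-m) * ((1-t)/(1-m) - 1) = m - t := by nlinarith [hc]
        nlinarith
      nlinarith
  constructor
  · rcases eq_or_ne m t with rfl|hne
    · simp
    · nlinarith [main hne, div_pos (main hne) hlog2]
  · intro heq
    by_contra hne
    have h1 := main hne
    have h2 : Hb t + (Real.logb 2 (1-t) - Real.logb 2 t) * (m - t) - Hb m = 0 := by
      rw [heq]; ring
    rw [key] at h2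
    have := div_pos h1 hlog2
    linarith

/-- Scaled Gibbs inequality for a group with error mass `e` and correct mass `c`. -/
lemma scaledGibbs {e c t : ℝ} (he : 0 ≤ e) (hc : 0 ≤ c) (ht0 : 0 < t) (ht1 : t < 1) :
    L (e+c) - L e - L c ≤ (e+c) * Hb t + (Real.logb 2 (1-t) - Real.logb 2 t) * (e - t*(e+c)) ∧
    (L (e+c) - L e - L c = (e+c) * Hb t + (Real.logb 2 (1-t) - Real.logb 2 t) * (e - t*(e+c))
      → e = t*(e+c)) := by
  rcases eq_or_lt_of_le (by linarith : (0:ℝ) ≤ e + c) with hs|hs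
  · have he0 : e = 0 := by linarith
    have hc0 : c = 0 := by linarith
    simp [he0, hc0, L]
  · set s := e + c with hsdef
    have hm0 : 0 ≤ e/s := by positivity
    have hm1 : e/s ≤ 1 := by
      rw [div_le_one hs]; linarith
    obtain ⟨hg, hgeq⟩ := binGibbs hm0 hm1 ht0 ht1
    have hes : (e/s) * s = e := by field_simp
    have hcs : (1 - e/s) * s = c := by field_simp; linarith
    have hLe := L_mul hm0 (le_of_lt hs)
    rw [hes] at hLe
    have hLc := L_mul (by linarith : (0:ℝ) ≤ 1 - e/s) (le_of_lt hs)
    rw [hcs] at hLc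
    have expand : L s - L e - L c = s * Hb (e/s) := by
      rw [hLe, hLc, Hb_eq]; ring
    constructor
    · rw [expand]
      have := mul_le_mul_of_nonneg_left hg (le_of_lt hs)
      calc s * Hb (e/s) ≤ s * (Hb t + (Real.logb 2 (1-t) - Real.logb 2 t) * (e/s - t)) := this
        _ = s * Hb t + (Real.logb 2 (1-t) - Real.logb 2 t) * (e - t*s) := by
            field_simp
    · intro heq
      rw [expand] at heq
      have h2 : Hb (e/s) = Hb t + (Real.logb 2 (1-t) - Real.logb 2 t) * (e/s - t) := by
        have hsne : s ≠ 0 := ne_of_gt hs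
        field_simp at heq ⊢
        nlinarith [heq]
      have := hgeq h2
      rw [← this]
      field_simp

/-- Rigidity: if the conditional entropy equals `Hb t` and the average error is `≤ t ≤ 1/2`,
then every group has conditional error exactly `t`. -/
lemma rigidity {B : Type*} [Fintype B] (e c : B → ℝ) (t : ℝ)
    (he : ∀ w, 0 ≤ e w) (hc : ∀ w, 0 ≤ c w)
    (hsum : ∑ w, (e w + c w) = 1)
    (hH : ∑ w, (L (e w + c w) - L (e w) - L (c w)) = Hb t)
    (hE : ∑ w, e w ≤ t) (ht0 : 0 ≤ t) (ht : t ≤ 1/2) :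
    ∀ w, e w = t * (e w + c w) := by
  rcases eq_or_lt_of_le ht0 with h0|h0
  · intro w
    rw [← h0] at hE ⊢
    have h1 : ∀ w ∈ Finset.univ, 0 ≤ e w := fun w _ => he w
    have h2 : ∑ w, e w = 0 := le_antisymm hE (Finset.sum_nonneg h1)
    have := (Finset.sum_eq_zero_iff_of_nonneg h1).mp h2 w (Finset.mem_univ w)
    rw [this]; ring
  · have ht1 : t < 1 := by linarith
    set sl := Real.logb 2 (1-t) - Real.logb 2 t with hsl
    have hslnn : 0 ≤ sl := by
      rw [hsl]
      have : Real.logb 2 t ≤ Real.logb 2 (1-t) := by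
        exact Real.logb_le_logb_of_le (by norm_num) h0 (by linarith)
      linarith
    set term : B → ℝ := fun w =>
      (e w + c w) * Hb t + sl * (e w - t*(e w + c w)) - (L (e w + c w) - L (e w) - L (c w))
      with hterm
    have htnn : ∀ w ∈ Finset.univ, 0 ≤ term w := by
      intro w _
      have := (scaledGibbs (he w) (hc w) h0 ht1).1
      simp only [hterm, hsl]
      linarith
    have hsum' : ∑ w, term w = sl * (∑ w, e w - t) := by
      simp only [hterm]
      rw [Finset.sum_sub_distrib, Finset.sum_add_distrib, ← Finset.sum_mul,
        ← Finset.mul_sum, hsum, hH, Finset.sum_sub_distrib, ← Finset.mul_sum, hsum]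
      ring
    have hle : ∑ w, term w ≤ 0 := by
      rw [hsum']
      have : ∑ w, e w - t ≤ 0 := by linarith
      exact mul_nonpos_of_nonneg_of_nonpos hslnn this
    have hzero : ∑ w, term w = 0 :=
      le_antisymm hle (Finset.sum_nonneg htnn)
    intro w
    have := (Finset.sum_eq_zero_iff_of_nonneg htnn).mp hzero w (Finset.mem_univ w)
    have heq : L (e w + c w) - L (e w) - L (c w)
        = (e w + c w) * Hb t + sl * (e w - t*(e w + c w)) := by
      simp only [hterm] at this
      linarith
    exact (scaledGibbs (he w) (hc w) h0 ht1).2 heq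

/-! ### Probability lemmas -/

variable {Ω : Type*} [Fintype Ω] (P : FinProb Ω)

lemma pr_nonneg {A : Type*} [DecidableEq A] (f : Ω → A) (a : A) : 0 ≤ pr P f a :=
  Finset.sum_nonneg fun ω _ => by split <;> simp [P.nonneg ω]

lemma sum_pr {A : Type*} [Fintype A] [DecidableEq A] (f : Ω → A) : ∑ a, pr P f a = 1 := by
  unfold pr
  rw [Finset.sum_comm, ← P.sum_one]
  apply Finset.sum_congr rfl
  intro ω _
  simp

lemma sum_pr_mul {A : Type*} [Fintype A] [DecidableEq A] (f : Ω → A) (F : A → ℝ) :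
    ∑ a, pr P f a * F a = ∑ ω, P.μ ω * F (f ω) := by
  unfold pr
  simp_rw [Finset.sum_mul, ite_mul, zero_mul]
  rw [Finset.sum_comm]
  apply Finset.sum_congr rfl
  intro ω _
  simp [Finset.sum_ite_eq]

lemma pr_fst_marg {A B : Type*} [Fintype A] [DecidableEq A] [DecidableEq B]
    (f : Ω → A) (g : Ω → B) (b : B) :
    ∑ a, pr P (fun ω => (f ω, g ω)) (a, b) = pr P g b := by
  unfold pr
  rw [Finset.sum_comm]
  apply Finset.sum_congr rfl
  intro ω _
  by_cases h : g ω = b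
  · simp [h, Prod.ext_iff, Finset.sum_ite_eq]
  · simp [h, Prod.ext_iff]

lemma pr_snd_marg {A B : Type*} [DecidableEq A] [Fintype B] [DecidableEq B]
    (f : Ω → A) (g : Ω → B) (a : A) :
    ∑ b, pr P (fun ω => (f ω, g ω)) (a, b) = pr P f a := by
  unfold pr
  rw [Finset.sum_comm]
  apply Finset.sum_congr rfl
  intro ω _
  by_cases h : f ω = a
  · simp [h, Prod.ext_iff, Finset.sum_ite_eq]
  · simp [h, Prod.ext_iff]

lemma H_eq {A : Type*} [Fintype A] [DecidableEq A] (f : Ω → A) :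
    H P f = - ∑ a, L (pr P f a) := rfl

lemma condH_decomp (X : Ω → Fin 2) {B : Type*} [Fintype B] [DecidableEq B] (W : Ω → B) :
    H P (fun ω => (X ω, W ω)) - H P W
      = ∑ w, (L (pr P (fun ω => (X ω, W ω)) (0, w) + pr P (fun ω => (X ω, W ω)) (1, w))
          - L (pr P (fun ω => (X ω, W ω)) (0, w)) - L (pr P (fun ω => (X ω, W ω)) (1, w))) := by
  rw [H_eq, H_eq]
  rw [Fintype.sum_prod_type]
  rw [Finset.sum_comm]
  rw [Finset.sum_sub_distrib, Finset.sum_sub_distrib]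
  have hm : ∀ w, pr P W w = pr P (fun ω => (X ω, W ω)) (0, w) + pr P (fun ω => (X ω, W ω)) (1, w) := by
    intro w
    rw [← pr_fst_marg P X W w, Fin.sum_univ_two]
  have h1 : ∑ w, L (pr P W w)
      = ∑ w, L (pr P (fun ω => (X ω, W ω)) (0, w) + pr P (fun ω => (X ω, W ω)) (1, w)) := by
    apply Finset.sum_congr rfl; intro w _; rw [hm w]
  have h2 : ∀ w, ∑ x : Fin 2, L (pr P (fun ω => (X ω, W ω)) (x, w))
      = L (pr P (fun ω => (X ω, W ω)) (0, w)) + L (pr P (fun ω => (X ω, W ω)) (1, w)) := by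
    intro w; rw [Fin.sum_univ_two]
  rw [← h1]
  rw [Finset.sum_congr rfl (fun w _ => h2 w)]
  ring_nf
  rw [Finset.sum_add_distrib]
  ring

lemma H_uniform (X : Ω → Fin 2) (hu : ∀ x, pr P X x = 1/2) : H P X = 1 := by
  rw [H_eq, Fin.sum_univ_two, hu 0, hu 1, L_half]
  ring

/-! ### Bit flipping -/

def fl (a : Fin 2) : Fin 2 := if a = 0 then 1 else 0

@[simp] lemma fl_zero : fl 0 = 1 := rfl
@[simp] lemma fl_one : fl 1 = 0 := rfl
lemma fl_fl (a : Fin 2) : fl (fl a) = a := by fin_cases a <;> rfl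

lemma eq_fl_or (y a : Fin 2) : y = a ∨ y = fl a := by
  fin_cases y <;> fin_cases a <;> simp [fl]

/-! ### Converse -/

section Converse

variable {n m : ℕ} (P : FinProb (Fin n)) (X X1 : Fin n → Fin 2) (X2 : Fin n → Fin m)

/-- Rigidity at the joint decoder. -/
lemma R2 (g2 : Fin 2 → Fin m → Fin 2) (D12 : ℝ)
    (h0 : 0 ≤ D12) (h2 : D12 ≤ 1/2)
    (hH2 : H P (fun ω => (X ω, X1 ω, X2 ω)) - H P (fun ω => (X1 ω, X2 ω)) = Hb D12)
    (hd12 : Edist P X (fun ω => g2 (X1 ω) (X2 ω)) ≤ D12) :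
    ∀ y (w : Fin 2 × Fin m),
      D12 * pr P (fun ω => (X1 ω, X2 ω)) w ≤ pr P (fun ω => (X ω, X1 ω, X2 ω)) (y, w) := by
  set W := fun ω => (X1 ω, X2 ω) with hW
  set pr3 := pr P (fun ω => (X ω, X1 ω, X2 ω)) with hpr3
  set e2 : Fin 2 × Fin m → ℝ := fun w => pr3 (fl (g2 w.1 w.2), w) with he2
  set c2 : Fin 2 × Fin m → ℝ := fun w => pr3 (g2 w.1 w.2, w) with hc2
  have hsum2 : ∀ w, e2 w + c2 w = pr P W w := by
    intro w
    rw [← pr_fst_marg P X W w, Fin.sum_univ_two]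
    rcases eq_fl_or (g2 w.1 w.2) 0 with h|h <;> rw [he2, hc2] <;> simp only [h] <;>
      simp [fl, add_comm, hpr3, hW]
  have key := rigidity e2 c2 D12
    (fun w => pr_nonneg P _ _) (fun w => pr_nonneg P _ _)
    (by rw [Finset.sum_congr rfl (fun w _ => hsum2 w)]; exact sum_pr P W)
    (by
      have hc : H P (fun ω => (X ω, X1 ω, X2 ω)) - H P W
          = ∑ w, (L (pr3 (0, w) + pr3 (1, w)) - L (pr3 (0, w)) - L (pr3 (1, w))) :=
        condH_decomp P X W
      rw [← hH2, hc]
      apply Finset.sum_congr rfl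
      intro w _
      rcases eq_fl_or (g2 w.1 w.2) 0 with h|h
      · simp only [he2, hc2, h, fl]
        norm_num
        rw [L_comm3]
      · simp only [he2, hc2, h, fl]
        norm_num)
    (by
      have hEd : Edist P X (fun ω => g2 (X1 ω) (X2 ω))
          = ∑ p : Fin 2 × (Fin 2 × Fin m), pr3 p * (if p.1 = g2 p.2.1 p.2.2 then (0:ℝ) else 1) := by
        rw [hpr3, sum_pr_mul P (fun ω => (X ω, X1 ω, X2 ω))
          (fun p => if p.1 = g2 p.2.1 p.2.2 then (0:ℝ) else 1)]
        rfl
      have hsplit : ∑ p : Fin 2 × (Fin 2 × Fin m), pr3 p * (if p.1 = g2 p.2.1 p.2.2 then (0:ℝ) else 1)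
          = ∑ w, e2 w := by
        rw [Fintype.sum_prod_type, Finset.sum_comm]
        apply Finset.sum_congr rfl
        intro w _
        rw [Fin.sum_univ_two]
        rcases eq_fl_or (g2 w.1 w.2) 0 with h|h <;>
          simp [he2, h, fl]
      rw [hEd, hsplit] at hd12
      exact hd12) h0 h2
  intro y w
  have h1 := key w
  rw [hsum2 w] at h1
  have hcw : c2 w = (1 - D12) * pr P W w := by
    have := hsum2 w; linarith
  have hWnn := pr_nonneg P W w
  rcases eq_fl_or y (g2 w.1 w.2) with h|h
  · have : pr3 (y, w) = c2 w := by rw [h]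
    rw [this, hcw]
    nlinarith
  · have : pr3 (y, w) = e2 w := by rw [h]
    rw [this, h1]

/-- Rigidity at decoder 1. -/
lemma R1 (D1 : ℝ) (h0 : 0 ≤ D1) (h2 : D1 ≤ 1/2)
    (hH1 : H P (fun ω => (X ω, X1 ω)) - H P X1 = Hb D1)
    (hd1 : Edist P X X1 ≤ D1) :
    ∀ a, pr P (fun ω => (X ω, X1 ω)) (fl a, a) = D1 * pr P X1 a := by
  set pr2 := pr P (fun ω => (X ω, X1 ω)) with hpr2
  set e1 : Fin 2 → ℝ := fun a => pr2 (fl a, a) with he1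
  set c1 : Fin 2 → ℝ := fun a => pr2 (a, a) with hc1
  have hsum1 : ∀ a, e1 a + c1 a = pr P X1 a := by
    intro a
    rw [← pr_fst_marg P X X1 a, Fin.sum_univ_two]
    rcases eq_fl_or a 0 with h|h <;> simp only [he1, hc1, h, fl] <;> norm_num <;>
      rw [add_comm]
  have key := rigidity e1 c1 D1
    (fun w => pr_nonneg P _ _) (fun w => pr_nonneg P _ _)
    (by rw [Finset.sum_congr rfl (fun w _ => hsum1 w)]; exact sum_pr P X1)
    (by
      have hc : H P (fun ω => (X ω, X1 ω)) - H P X1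
          = ∑ a, (L (pr2 (0, a) + pr2 (1, a)) - L (pr2 (0, a)) - L (pr2 (1, a))) :=
        condH_decomp P X X1
      rw [← hH1, hc]
      apply Finset.sum_congr rfl
      intro a _
      rcases eq_fl_or a 0 with h|h
      · simp only [he1, hc1, h, fl]
        norm_num
        rw [L_comm3]
      · simp only [he1, hc1, h, fl]
        norm_num)
    (by
      have hEd : Edist P X X1
          = ∑ p : Fin 2 × Fin 2, pr2 p * (if p.1 = p.2 then (0:ℝ) else 1) := by
        rw [hpr2, sum_pr_mul P (fun ω => (X ω, X1 ω)) (fun p => if p.1 = p.2 then (0:ℝ) else 1)]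
        rfl
      have hsplit : ∑ p : Fin 2 × Fin 2, pr2 p * (if p.1 = p.2 then (0:ℝ) else 1)
          = ∑ a, e1 a := by
        rw [Fintype.sum_prod_type, Finset.sum_comm]
        apply Finset.sum_congr rfl
        intro a _
        rw [Fin.sum_univ_two]
        rcases eq_fl_or a 0 with h|h <;> simp [he1, h, fl]
      rw [hEd, hsplit] at hd1
      exact hd1) h0 h2
  intro a
  have h1 := key a
  rw [hsum1 a] at h1
  exact h1

/-- If D1 < 1/2 then X1 is uniform. -/
lemma X1_uniform (D1 : ℝ) (hlt : D1 < 1/2)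
    (hu : pr P X 0 = 1/2)
    (hR1 : ∀ a, pr P (fun ω => (X ω, X1 ω)) (fl a, a) = D1 * pr P X1 a) :
    ∀ a, pr P X1 a = 1/2 := by
  set pr2 := pr P (fun ω => (X ω, X1 ω)) with hpr2
  have psum : pr P X1 0 + pr P X1 1 = 1 := by
    have := sum_pr P X1; rwa [Fin.sum_univ_two] at this
  have marg : pr2 (0, 0) + pr2 (0, 1) = 1/2 := by
    have := pr_snd_marg P X X1 0
    rwa [Fin.sum_univ_two, hu] at this
  have m0 : pr2 (0, 0) + pr2 (1, 0) = pr P X1 0 := by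
    have := pr_fst_marg P X X1 0
    rwa [Fin.sum_univ_two] at this
  have r0 : pr2 (1, 0) = D1 * pr P X1 0 := by
    have := hR1 0; simpa [fl] using this
  have r1 : pr2 (0, 1) = D1 * pr P X1 1 := by
    have := hR1 1; simpa [fl] using this
  have key : (1 - 2*D1) * (pr P X1 0 - 1/2) = 0 := by nlinarith
  have h20 : pr P X1 0 = 1/2 := by
    rcases mul_eq_zero.mp key with h|h
    · linarith
    · linarith
  intro a
  rcases eq_fl_or a 0 with h|h
  · rw [h]; exact h20
  · rw [h]; show pr P X1 1 = 1/2; linarith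

theorem converse (g1 : Fin m → Fin 2) (g2 : Fin 2 → Fin m → Fin 2) (D1 D12 : ℝ)
    (h0 : 0 ≤ D12) (h1 : D12 ≤ D1) (h2 : D1 ≤ 1/2)
    (hu : ∀ x, pr P X x = 1/2)
    (hind : Indep P X1 X2)
    (hmi1 : MI P X X1 = 1 - Hb D1)
    (hmi2 : MI P X (fun ω => (X1 ω, X2 ω)) = 1 - Hb D12)
    (hd1 : Edist P X X1 ≤ D1)
    (hd12 : Edist P X (fun ω => g2 (X1 ω) (X2 ω)) ≤ D12) :
    1/2 + D12 - D1 ≤ Edist P X (fun ω => g1 (X2 ω)) := by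
  have h00 : (0:ℝ) ≤ D1 := le_trans h0 h1
  have h12half : D12 ≤ 1/2 := le_trans h1 h2
  set W := fun ω => (X1 ω, X2 ω) with hW
  set pr3 := pr P (fun ω => (X ω, X1 ω, X2 ω)) with hpr3
  have HX : H P X = 1 := H_uniform P X hu
  have hH1 : H P (fun ω => (X ω, X1 ω)) - H P X1 = Hb D1 := by
    unfold MI at hmi1
    rw [HX] at hmi1
    linarith
  have hH2 : H P (fun ω => (X ω, X1 ω, X2 ω)) - H P W = Hb D12 := by
    unfold MI at hmi2
    rw [HX] at hmi2
    have : H P (fun ω => (X ω, X1 ω, X2 ω)) = H P (fun ω => (X ω, W ω)) := rfl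
    rw [this]
    linarith
  have hR2 : ∀ y (w : Fin 2 × Fin m), D12 * pr P W w ≤ pr3 (y, w) :=
    R2 P X X1 X2 g2 D12 h0 h12half hH2 hd12
  have hmarg3 : ∀ w : Fin 2 × Fin m, pr3 (0, w) + pr3 (1, w) = pr P W w := by
    intro w
    have := pr_fst_marg P X W w
    rwa [Fin.sum_univ_two] at this
  have collapse : ∀ k : Fin 2 × Fin m → Fin 2,
      Edist P X (fun ω => k (W ω)) = ∑ w, pr3 (fl (k w), w) := by
    intro k
    have h1' : Edist P X (fun ω => k (W ω))
        = ∑ p : Fin 2 × (Fin 2 × Fin m), pr3 p * (if p.1 = k p.2 then (0:ℝ) else 1) := by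
      rw [hpr3, sum_pr_mul P (fun ω => (X ω, X1 ω, X2 ω))
        (fun p => if p.1 = k p.2 then (0:ℝ) else 1)]
      rfl
    rw [h1', Fintype.sum_prod_type, Finset.sum_comm]
    apply Finset.sum_congr rfl
    intro w _
    rw [Fin.sum_univ_two]
    rcases eq_fl_or (k w) 0 with h|h <;> simp [h, fl]
  have hE2 : Edist P X (fun ω => g1 (X2 ω)) = ∑ w, pr3 (fl (g1 w.2), w) :=
    collapse (fun w => g1 w.2)
  have hE1 : Edist P X X1 = ∑ w, pr3 (fl w.1, w) :=
    collapse (fun w => w.1)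
  rcases eq_or_lt_of_le h2 with hD1half|hD1lt
  · rw [hE2]
    have hge : ∑ w, pr3 (fl (g1 w.2), w) ≥ ∑ w : Fin 2 × Fin m, D12 * pr P W w :=
      Finset.sum_le_sum (fun w _ => hR2 (fl (g1 w.2)) w)
    have : ∑ w : Fin 2 × Fin m, D12 * pr P W w = D12 := by
      rw [← Finset.mul_sum, sum_pr P W, mul_one]
    rw [this] at hge
    linarith
  · have hR1 := R1 P X X1 D1 h00 h2 hH1 hd1
    have hq := X1_uniform P X X1 D1 hD1lt (hu 0) hR1
    have perw : ∀ w : Fin 2 × Fin m,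
        pr P X1 w.1 * pr P X2 w.2 * (if w.1 = g1 w.2 then (0:ℝ) else 1)
          + 2 * (D12 * (pr P X1 w.1 * pr P X2 w.2) * (if w.1 = g1 w.2 then (1:ℝ) else 0))
          - pr3 (fl w.1, w)
        ≤ pr3 (fl (g1 w.2), w) := by
      intro w
      have hWw : pr P W w = pr P X1 w.1 * pr P X2 w.2 := by
        have := hind w.1 w.2
        rw [hW]
        convert this using 2
      by_cases h : w.1 = g1 w.2
      · rw [if_pos h, if_pos h]
        have := hR2 (fl w.1) w
        rw [hWw] at this
        rw [← h]
        linarith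
      · rw [if_neg h, if_neg h]
        have hflip : g1 w.2 = fl w.1 := by
          rcases eq_fl_or (g1 w.2) w.1 with h'|h'
          · exact absurd h'.symm h
          · exact h'
        have hflip2 : fl (g1 w.2) = w.1 := by
          rw [hflip, fl_fl]
        rw [hflip2]
        have hm := hmarg3 w
        have : pr3 (w.1, w) + pr3 (fl w.1, w) = pr P W w := by
          rcases eq_fl_or w.1 0 with h'|h'
          · rw [h', fl_zero]; exact hm
          · rw [fl_zero] at h'
            rw [h', fl_one, add_comm]; exact hm
        rw [hWw] at this
        linarith
    have hsum := Finset.sum_le_sum (s := (Finset.univ : Finset (Fin 2 × Fin m))) (fun w _ => perw w)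
    rw [Finset.sum_sub_distrib, Finset.sum_add_distrib] at hsum
    have hS1 : ∑ w : Fin 2 × Fin m,
        pr P X1 w.1 * pr P X2 w.2 * (if w.1 = g1 w.2 then (0:ℝ) else 1) = 1/2 := by
      rw [Fintype.sum_prod_type, Finset.sum_comm]
      have : ∀ b, ∑ a : Fin 2, pr P X1 a * pr P X2 b * (if a = g1 b then (0:ℝ) else 1)
          = pr P X2 b * (1/2) := by
        intro b
        rw [Fin.sum_univ_two, hq 0, hq 1]
        rcases eq_fl_or (g1 b) 0 with h|h
        · rw [h]; simp; ring
        · rw [fl_zero] at h; rw [h]; simp; ring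
      rw [Finset.sum_congr rfl (fun b _ => this b), ← Finset.sum_mul, sum_pr P X2]
      norm_num
    have hS2 : ∑ w : Fin 2 × Fin m,
        2 * (D12 * (pr P X1 w.1 * pr P X2 w.2) * (if w.1 = g1 w.2 then (1:ℝ) else 0)) = D12 := by
      rw [Fintype.sum_prod_type, Finset.sum_comm]
      have : ∀ b, ∑ a : Fin 2, 2 * (D12 * (pr P X1 a * pr P X2 b) * (if a = g1 b then (1:ℝ) else 0))
          = D12 * pr P X2 b := by
        intro b
        rw [Fin.sum_univ_two, hq 0, hq 1]
        rcases eq_fl_or (g1 b) 0 with h|h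
        · rw [h]; simp; ring
        · rw [fl_zero] at h; rw [h]; simp; ring
      rw [Finset.sum_congr rfl (fun b _ => this b), ← Finset.mul_sum, sum_pr P X2]
      norm_num
    rw [hS1, hS2, ← hE1, ← hE2] at hsum
    linarith

end Converse

end MDCProof

namespace MDCProof

open MDC

set_option maxHeartbeats 4000000 in
lemma achieve (D1 D12 : ℝ) (h0 : 0 ≤ D12) (h1 : D12 ≤ D1) (h2 : D1 ≤ 1/2) :
    ∃ (n m : ℕ) (P : FinProb (Fin n)) (X X1 : Fin n → Fin 2)
        (X2 : Fin n → Fin m) (g1 : Fin m → Fin 2) (g2 : Fin 2 → Fin m → Fin 2),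
      (∀ x, pr P X x = 1/2) ∧
      Indep P X1 X2 ∧
      MI P X X1 = 1 - Hb D1 ∧
      MI P X (fun ω => (X1 ω, X2 ω)) = 1 - Hb D12 ∧
      Edist P X X1 ≤ D1 ∧
      Edist P X (fun ω => g2 (X1 ω) (X2 ω)) ≤ D12 ∧
      1/2 + D12 - D1 = Edist P X (fun ω => g1 (X2 ω)) := by
  have ha2 : D12 ≤ 1/2 := le_trans h1 h2
  have h00 : (0:ℝ) ≤ D1 := le_trans h0 h1
  set lam : ℝ := if D12 < 1/2 then (D1 - D12)/(1/2 - D12) else 0 with hlam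
  have hl0 : 0 ≤ lam := by
    rw [hlam]; split_ifs with h
    · exact div_nonneg (by linarith) (by linarith)
    · norm_num
  have hl1 : lam ≤ 1 := by
    rw [hlam]; split_ifs with h
    · rw [div_le_one (by linarith)]; linarith
    · norm_num
  have hk : D12 + lam * (1/2 - D12) = D1 := by
    rw [hlam]; split_ifs with h
    · rw [div_mul_cancel₀ _ (by linarith : (1:ℝ)/2 - D12 ≠ 0)]; ring
    · have hD12 : D12 = 1/2 := le_antisymm ha2 (not_lt.mp h)
      have hD1 : D1 = 1/2 := le_antisymm h2 (by linarith)
      rw [hD12, hD1]; ring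
  have hA : (0:ℝ) ≤ (1-lam)*(1-D12)/4 := by
    have := mul_nonneg (by linarith : (0:ℝ) ≤ 1-lam) (by linarith : (0:ℝ) ≤ 1-D12); linarith
  have hB : (0:ℝ) ≤ (1-lam)*D12/4 := by
    have := mul_nonneg (by linarith : (0:ℝ) ≤ 1-lam) h0; linarith
  have hC : (0:ℝ) ≤ lam*(1-D12)/4 := by
    have := mul_nonneg hl0 (by linarith : (0:ℝ) ≤ 1-D12); linarith
  have hD : (0:ℝ) ≤ lam*D12/4 := by
    have := mul_nonneg hl0 h0; linarith
  have hnn : ∀ ω, 0 ≤ (![(1-lam)*(1-D12)/4,(1-lam)*(1-D12)/4,(1-lam)*D12/4,(1-lam)*D12/4,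
      lam*(1-D12)/4,lam*D12/4,lam*(1-D12)/4,lam*D12/4,
      (1-lam)*(1-D12)/4,(1-lam)*(1-D12)/4,(1-lam)*D12/4,(1-lam)*D12/4,
      lam*(1-D12)/4,lam*D12/4,lam*(1-D12)/4,lam*D12/4] : Fin 16 → ℝ) ω := by
    intro ω; fin_cases ω <;> simpa
  have hsum : ∑ ω, (![(1-lam)*(1-D12)/4,(1-lam)*(1-D12)/4,(1-lam)*D12/4,(1-lam)*D12/4,
      lam*(1-D12)/4,lam*D12/4,lam*(1-D12)/4,lam*D12/4,
      (1-lam)*(1-D12)/4,(1-lam)*(1-D12)/4,(1-lam)*D12/4,(1-lam)*D12/4,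
      lam*(1-D12)/4,lam*D12/4,lam*(1-D12)/4,lam*D12/4] : Fin 16 → ℝ) ω = 1 := by
    simp [Fin.sum_univ_succ]
    ring
  set P : FinProb (Fin 16) := ⟨_, hnn, hsum⟩ with hP
  set X : Fin 16 → Fin 2 := ![0,0,0,0,0,0,0,0,1,1,1,1,1,1,1,1] with hX
  set X1 : Fin 16 → Fin 2 := ![0,0,1,1,0,0,1,1,1,1,0,0,1,1,0,0] with hX1
  set X2 : Fin 16 → Fin 4 := ![0,1,0,1,2,3,2,3,1,0,1,0,3,2,3,2] with hX2
  set g1 : Fin 4 → Fin 2 := fun b => if b = 1 ∨ b = 3 then 1 else 0 with hg1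
  set g2 : Fin 2 → Fin 4 → Fin 2 := fun x1 b => if b = 2 then 0 else if b = 3 then 1 else x1
    with hg2
  have hprX : ∀ x, pr P X x = 1/2 := by
    intro x
    fin_cases x <;>
      (simp (config := { decide := true }) [pr, Fin.sum_univ_succ, hP, hX]; ring)
  have hprX1 : ∀ x, pr P X1 x = 1/2 := by
    intro x
    fin_cases x <;>
      (simp (config := { decide := true }) [pr, Fin.sum_univ_succ, hP, hX1]; ring)
  have hind : Indep P X1 X2 := by
    intro a b
    fin_cases a <;> fin_cases b <;>
      (simp (config := { decide := true }) [pr, Fin.sum_univ_succ, hP, hX1, hX2]; ring)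
  have hpair : H P (fun ω => (X ω, X1 ω))
      = -(2 * L ((1 - (D12 + lam * (1/2 - D12)))/2) + 2 * L ((D12 + lam * (1/2 - D12))/2)) := by
    rw [H_eq]
    simp (config := { decide := true })
      [pr, Fintype.sum_prod_type, Fin.sum_univ_succ, hP, hX, hX1]
    ring_nf
  rw [hk] at hpair
  have hmi1 : MI P X X1 = 1 - Hb D1 := by
    unfold MI
    rw [H_uniform P X hprX, H_uniform P X1 hprX1, hpair,
      Lhalfsplit (by linarith : (0:ℝ) ≤ 1 - D1), Lhalfsplit h00, Hb_eq]
    ring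
  have hW8 : H P (fun ω => (X1 ω, X2 ω)) = -(4 * L ((1-lam)/4) + 4 * L (lam/4)) := by
    rw [H_eq]
    simp (config := { decide := true })
      [pr, Fintype.sum_prod_type, Fin.sum_univ_succ, hP, hX1, hX2]
    ring_nf
  have htri : H P (fun ω => (X ω, X1 ω, X2 ω))
      = -(4*(L ((1-lam)*(1-D12)/4) + L ((1-lam)*D12/4)
          + L (lam*(1-D12)/4) + L (lam*D12/4))) := by
    rw [H_eq]
    simp (config := { decide := true })
      [pr, Fintype.sum_prod_type, Fin.sum_univ_succ, hP, hX, hX1, hX2]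
    ring_nf
  have hmi2 : MI P X (fun ω => (X1 ω, X2 ω)) = 1 - Hb D12 := by
    unfold MI
    rw [H_uniform P X hprX, hW8, htri,
      Lquart (by linarith : (0:ℝ) ≤ 1 - lam), Lquart hl0,
      LquartMul (by linarith : (0:ℝ) ≤ 1-lam) (by linarith : (0:ℝ) ≤ 1-D12),
      LquartMul (by linarith : (0:ℝ) ≤ 1-lam) h0,
      LquartMul hl0 (by linarith : (0:ℝ) ≤ 1-D12),
      LquartMul hl0 h0, Hb_eq]
    ring
  have hed1 : Edist P X X1 = D1 := by
    simp (config := { decide := true }) [Edist, Fin.sum_univ_succ, hP, hX, hX1]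
    linear_combination hk
  have hed2 : Edist P X (fun ω => g2 (X1 ω) (X2 ω)) = D12 := by
    simp (config := { decide := true }) [Edist, Fin.sum_univ_succ, hP, hX, hX1, hX2, hg2]
    ring
  have hed3 : Edist P X (fun ω => g1 (X2 ω)) = 1/2 + D12 - D1 := by
    simp (config := { decide := true }) [Edist, Fin.sum_univ_succ, hP, hX, hX2, hg1]
    linear_combination (-1 : ℝ) * hk
  exact ⟨16, 4, P, X, X1, X2, g1, g2, hprX, hind, hmi1, hmi2,
    le_of_eq hed1, le_of_eq hed2, hed3.symm⟩

end MDCProof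

open MDC
/-- Theorem 5: for a binary symmetric source with Hamming distortion,
D*₂(D₁, D₁₂) = 1/2 + D₁₂ − D₁. -/
theorem stmt14 (D1 D12 : ℝ) (h0 : 0 ≤ D12) (h1 : D12 ≤ D1) (h2 : D1 ≤ 1/2) :
    IsLeast {e : ℝ | ∃ (n m : ℕ) (P : FinProb (Fin n)) (X X1 : Fin n → Fin 2)
        (X2 : Fin n → Fin m) (g1 : Fin m → Fin 2) (g2 : Fin 2 → Fin m → Fin 2),
      (∀ x, pr P X x = 1/2) ∧
      Indep P X1 X2 ∧
      MI P X X1 = 1 - Hb D1 ∧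
      MI P X (fun ω => (X1 ω, X2 ω)) = 1 - Hb D12 ∧
      Edist P X X1 ≤ D1 ∧
      Edist P X (fun ω => g2 (X1 ω) (X2 ω)) ≤ D12 ∧
      e = Edist P X (fun ω => g1 (X2 ω))}
    (1/2 + D12 - D1) := by
  constructor
  · obtain ⟨n, m, P, X, X1, X2, g1, g2, hprX, hind, hmi1, hmi2, hd1, hd12, he⟩ :=
      MDCProof.achieve D1 D12 h0 h1 h2
    exact ⟨n, m, P, X, X1, X2, g1, g2, hprX, hind, hmi1, hmi2, hd1, hd12, he⟩
  · rintro e ⟨n, m, P, X, X1, X2, g1, g2, hprX, hind, hmi1, hmi2, hd1, hd12, rfl⟩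
    exact MDCProof.converse P X X1 X2 g1 g2 D1 D12 h0 h1 h2 hprX hind hmi1 hmi2 hd1 hd12
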